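/- Let x̃^n be a sample from the boosted distribution (the law of the minimizer x^{n,⋆} of Z over M i.i.d. samples from ρ^⊗n, with P(Z_{x^n} > δ) ≤ η for a single sample, conditioned on {Z_{x^{n,⋆}} ≤ δ}), with δ ∈ (0,1), η ∈ (0,1). Let K ⊆ {1,…,n} be a (random, measurable) function of x̃^n with #K ≥ n_min and Z_{x̃^n_K} ≤ δ. Then for any v ∈ L²_μ(X), E(‖Q^{x̃^n_K}_{V_m} v‖²) ≤ (1−δ)^{-1} M (1 − η^M)^{-1} (n/n_min) ‖v‖². -/

import Mathlib

open MeasureTheory ProbabilityTheory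
open scoped ENNReal NNReal

noncomputable section

/-- Spectral norm (matrix operator norm w.r.t. the Euclidean norm) of a real square matrix. -/
def specNorm {m : ℕ} (A : Matrix (Fin m) (Fin m) ℝ) : ℝ :=
  ‖Matrix.toEuclideanCLM (𝕜 := ℝ) A‖

variable {d : ℕ}

/-- Squared `L²_μ` norm: `‖v‖² = ∫ v² dμ`. -/
def l2normSq {X : Set (Fin d → ℝ)} (μ : Measure X) (v : X → ℝ) : ℝ :=
  ∫ t, v t ^ 2 ∂μ

/-- Squared discrete semi-norm `‖v‖²_{x^n} = (1/n) ∑ᵢ w(xⁱ) v(xⁱ)²`. -/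
def discNormSq {X : Set (Fin d → ℝ)} (w : X → ℝ) {n : ℕ} (x : Fin n → X) (v : X → ℝ) : ℝ :=
  (1 / (n : ℝ)) * ∑ i, w (x i) * v (x i) ^ 2

/-- Empirical Gram matrix `G_{x^n} = (1/n) ∑ᵢ w(xⁱ) φ(xⁱ) ⊗ φ(xⁱ)`. -/
def gram {X : Set (Fin d → ℝ)} {m : ℕ} (w : X → ℝ) (φ : Fin m → X → ℝ) {n : ℕ}
    (x : Fin n → X) : Matrix (Fin m) (Fin m) ℝ :=
  Matrix.of fun j k => (1 / (n : ℝ)) * ∑ i, w (x i) * (φ j (x i) * φ k (x i))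

/-- Stability statistic `Z_{x^n} = ‖G_{x^n} − I‖₂`. -/
def Zstat {X : Set (Fin d → ℝ)} {m : ℕ} (w : X → ℝ) (φ : Fin m → X → ℝ) {n : ℕ}
    (x : Fin n → X) : ℝ :=
  specNorm (gram w φ x - 1)

/-- Orthogonal projection onto `V_m`: `P_{V_m} u = ∑ⱼ (∫ u φⱼ dμ) φⱼ`. -/
def proj {X : Set (Fin d → ℝ)} (μ : Measure X) {m : ℕ} (φ : Fin m → X → ℝ) (u : X → ℝ) :
    X → ℝ :=
  fun t => ∑ j, (∫ s, u s * φ j s ∂μ) * φ j t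

/-- Weighted supremum norm `‖v‖_{∞,w} = sup_x w(x)^{1/2} |v(x)|`. -/
def wSupNorm {X : Set (Fin d → ℝ)} (w : X → ℝ) (v : X → ℝ) : ℝ :=
  ⨆ t : X, Real.sqrt (w t) * |v t|

/-- The approximation space `V_m`, the span of `φ_1, …, φ_m`. -/
def Vspan {X : Set (Fin d → ℝ)} {m : ℕ} (φ : Fin m → X → ℝ) : Submodule ℝ (X → ℝ) :=
  Submodule.span ℝ (Set.range φ)

/-- Squared discrete semi-norm over a subsample indexed by `K`. -/
def discNormSqK {X : Set (Fin d → ℝ)} (w : X → ℝ) {n : ℕ} (x : Fin n → X)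
    (K : Finset (Fin n)) (v : X → ℝ) : ℝ :=
  (1 / (K.card : ℝ)) * ∑ i ∈ K, w (x i) * v (x i) ^ 2

/-- Empirical Gram matrix over a subsample indexed by `K`. -/
def gramK {X : Set (Fin d → ℝ)} {m : ℕ} (w : X → ℝ) (φ : Fin m → X → ℝ) {n : ℕ}
    (x : Fin n → X) (K : Finset (Fin n)) : Matrix (Fin m) (Fin m) ℝ :=
  Matrix.of fun j k => (1 / (K.card : ℝ)) * ∑ i ∈ K, w (x i) * (φ j (x i) * φ k (x i))

/-- Stability statistic of a subsample. -/
def ZstatK {X : Set (Fin d → ℝ)} {m : ℕ} (w : X → ℝ) (φ : Fin m → X → ℝ) {n : ℕ}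
    (x : Fin n → X) (K : Finset (Fin n)) : ℝ :=
  specNorm (gramK w φ x K - 1)

/-- Law of `M` i.i.d. samples, each an `n`-tuple of i.i.d. points with distribution `ρ`. -/
def bigP {X : Set (Fin d → ℝ)} (ρ : Measure X) (M n : ℕ) : Measure (Fin M → Fin n → X) :=
  Measure.pi fun _ => Measure.pi fun _ => ρ

/-- The constant `C(ε,M) = M (1−ε)^{1−ε}/(M−ε)^{1−ε}` (with `0⁰ = 1`). -/
def Cconst (M : ℕ) (ε : ℝ) : ℝ :=
  (M : ℝ) * (1 - ε) ^ (1 - ε) / ((M : ℝ) - ε) ^ (1 - ε)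


-- ===================== auxiliary lemmas =====================

section Aux

open scoped ENNReal NNReal

lemma quad_bound {m : ℕ} (A : Matrix (Fin m) (Fin m) ℝ) (c : Fin m → ℝ) :
    |∑ j, ∑ k, c j * (A j k * c k)| ≤ specNorm A * ∑ j, c j ^ 2 := by
  classical
  set c' : EuclideanSpace ℝ (Fin m) := (WithLp.equiv 2 _).symm c with hc'
  have happ : ∀ j, (Matrix.toEuclideanCLM (𝕜 := ℝ) A c') j = ∑ k, A j k * c k := by
    intro j
    rw [hc']
    simp [Matrix.toLin'_apply, Matrix.mulVec, dotProduct]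
  have h1 : (inner ℝ (Matrix.toEuclideanCLM (𝕜 := ℝ) A c') c' : ℝ)
      = ∑ j, ∑ k, c j * (A j k * c k) := by
    simp only [PiLp.inner_apply, RCLike.inner_apply, conj_trivial]
    refine Finset.sum_congr rfl fun j _ => ?_
    rw [happ j, Finset.mul_sum]
    refine Finset.sum_congr rfl fun k _ => ?_
    have : c' j = c j := rfl
    rw [this]
  have h2 : (inner ℝ c' c' : ℝ) = ∑ j, c j ^ 2 := by
    simp only [PiLp.inner_apply, RCLike.inner_apply, conj_trivial]
    refine Finset.sum_congr rfl fun j _ => ?_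
    have : c' j = c j := rfl
    rw [this]; ring
  have h3 : |(inner ℝ (Matrix.toEuclideanCLM (𝕜 := ℝ) A c') c' : ℝ)|
      ≤ specNorm A * (inner ℝ c' c' : ℝ) := by
    calc |(inner ℝ (Matrix.toEuclideanCLM (𝕜 := ℝ) A c') c' : ℝ)|
        ≤ ‖Matrix.toEuclideanCLM (𝕜 := ℝ) A c'‖ * ‖c'‖ := abs_real_inner_le_norm _ _
      _ ≤ specNorm A * ‖c'‖ * ‖c'‖ := by
          simp only [specNorm]
          have := ContinuousLinearMap.le_opNorm (Matrix.toEuclideanCLM (𝕜 := ℝ) A) c'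
          have h0 : (0:ℝ) ≤ ‖c'‖ := norm_nonneg _
          nlinarith [this, h0]
      _ = specNorm A * (‖c'‖ * ‖c'‖) := by ring
      _ = specNorm A * (inner ℝ c' c' : ℝ) := by rw [real_inner_self_eq_norm_mul_norm]
  rw [h1, h2] at h3
  exact h3

lemma gram_quadratic {X : Set (Fin d → ℝ)} (w : X → ℝ) {m : ℕ} (φ : Fin m → X → ℝ) {n : ℕ}
    (y : Fin n → X) (K : Finset (Fin n)) (c : Fin m → ℝ) :
    discNormSqK w y K (fun t => ∑ j, c j * φ j t)
      = ∑ j, ∑ k, c j * (gramK w φ y K j k * c k) := by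
  unfold discNormSqK gramK
  simp only [Matrix.of_apply]
  have h1 : ∀ i : Fin n, w (y i) * (∑ j, c j * φ j (y i)) ^ 2
      = ∑ j, ∑ k, w (y i) * (φ j (y i) * φ k (y i)) * (c j * c k) := by
    intro i
    rw [sq, Finset.sum_mul_sum, Finset.mul_sum]
    refine Finset.sum_congr rfl fun j _ => ?_
    rw [Finset.mul_sum]
    exact Finset.sum_congr rfl fun k _ => by ring
  rw [Finset.sum_congr rfl fun i _ => h1 i]
  simp only [Finset.mul_sum, Finset.sum_mul]
  rw [Finset.sum_comm]
  refine Finset.sum_congr rfl fun j _ => ?_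
  rw [Finset.sum_comm]
  exact Finset.sum_congr rfl fun k _ => Finset.sum_congr rfl fun i _ => by ring

lemma one_quadratic {m : ℕ} (c : Fin m → ℝ) :
    ∑ j, ∑ k, c j * ((1 : Matrix (Fin m) (Fin m) ℝ) j k * c k) = ∑ j, c j ^ 2 := by
  simp [Matrix.one_apply, mul_ite, ite_mul, Finset.sum_ite_eq', sq]

lemma quad_coeff_zero {a b : ℝ} (ha : 0 ≤ a) (h : ∀ t : ℝ, 0 ≤ a * t ^ 2 + b * t) : b = 0 := by
  rcases eq_or_lt_of_le ha with ha0 | ha0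
  · have h1 := h 1
    have h2 := h (-1)
    rw [← ha0] at h1 h2
    simp at h1 h2
    linarith
  · have h1 := h (-b / (2 * a))
    have : a * (-b / (2 * a)) ^ 2 + b * (-b / (2 * a)) = -(b ^ 2) / (4 * a) := by
      field_simp; ring
    rw [this] at h1
    have hb2 : b ^ 2 ≤ 0 := by
      by_contra hb
      push_neg at hb
      have : -(b ^ 2) / (4 * a) < 0 := div_neg_of_neg_of_pos (by linarith) (by linarith)
      linarith
    have : b ^ 2 = 0 := le_antisymm hb2 (sq_nonneg b)
    exact pow_eq_zero_iff (by norm_num) |>.mp this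

lemma discK_nonneg {X : Set (Fin d → ℝ)} (w : X → ℝ) (hw : ∀ t, 0 ≤ w t) {n : ℕ}
    (y : Fin n → X) (K : Finset (Fin n)) (u : X → ℝ) : 0 ≤ discNormSqK w y K u := by
  unfold discNormSqK
  apply mul_nonneg
  · positivity
  · exact Finset.sum_nonneg fun i _ => mul_nonneg (hw _) (sq_nonneg _)

lemma disc_nonneg {X : Set (Fin d → ℝ)} (w : X → ℝ) (hw : ∀ t, 0 ≤ w t) {n : ℕ}
    (y : Fin n → X) (u : X → ℝ) : 0 ≤ discNormSq w y u := by
  unfold discNormSq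
  apply mul_nonneg
  · positivity
  · exact Finset.sum_nonneg fun i _ => mul_nonneg (hw _) (sq_nonneg _)

lemma min_norm_le {X : Set (Fin d → ℝ)} (w : X → ℝ) (hw : ∀ t, 0 ≤ w t) {n : ℕ}
    (y : Fin n → X) (K : Finset (Fin n)) (v q : X → ℝ)
    (hmin : ∀ t : ℝ, discNormSqK w y K (v - q) ≤ discNormSqK w y K (v - (1 + t) • q)) :
    discNormSqK w y K q ≤ discNormSqK w y K v := by
  set κ : ℝ := 1 / (K.card : ℝ) with hκ
  set Bd : ℝ := κ * ∑ i ∈ K, w (y i) * ((v - q) (y i) * q (y i)) with hBd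
  have E1 : ∀ t : ℝ, discNormSqK w y K (v - (1 + t) • q)
      = discNormSqK w y K (v - q) - 2 * t * Bd + t ^ 2 * discNormSqK w y K q := by
    intro t
    unfold discNormSqK
    rw [hBd]
    have hpt : ∀ i ∈ K, w (y i) * ((v - (1 + t) • q) (y i)) ^ 2
        = w (y i) * ((v - q) (y i)) ^ 2 - 2 * t * (w (y i) * ((v - q) (y i) * q (y i)))
          + t ^ 2 * (w (y i) * (q (y i)) ^ 2) := by
      intro i _
      simp only [Pi.sub_apply, Pi.smul_apply, smul_eq_mul]
      ring
    rw [Finset.sum_congr rfl hpt, Finset.sum_add_distrib, Finset.sum_sub_distrib,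
      ← Finset.mul_sum, ← Finset.mul_sum]
    ring
  have E2 : discNormSqK w y K v
      = discNormSqK w y K (v - q) + 2 * Bd + discNormSqK w y K q := by
    unfold discNormSqK
    rw [hBd]
    have hpt : ∀ i ∈ K, w (y i) * (v (y i)) ^ 2
        = w (y i) * ((v - q) (y i)) ^ 2 + 2 * (w (y i) * ((v - q) (y i) * q (y i)))
          + w (y i) * (q (y i)) ^ 2 := by
      intro i _
      simp only [Pi.sub_apply]
      ring
    rw [Finset.sum_congr rfl hpt, Finset.sum_add_distrib, Finset.sum_add_distrib,
      ← Finset.mul_sum]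
    ring
  have hq0 : 0 ≤ discNormSqK w y K q := discK_nonneg w hw y K q
  have hvq0 : 0 ≤ discNormSqK w y K (v - q) := discK_nonneg w hw y K (v - q)
  have hB0 : Bd = 0 := by
    have h := quad_coeff_zero (a := discNormSqK w y K q) (b := -2 * Bd) hq0 ?_
    · linarith
    · intro t
      have := hmin t
      rw [E1 t] at this
      nlinarith [this]
  rw [E2, hB0]
  linarith

lemma phi_mul_integrable {X : Set (Fin d → ℝ)} {μ : Measure X} {f g : X → ℝ}
    (hf : MemLp f 2 μ) (hg : MemLp g 2 μ) : Integrable (fun t => f t * g t) μ := by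
  have h : MemLp (f • g) 1 μ :=
    MemLp.smul (p := 2) (q := 2) (r := 1) hg hf
  have := memLp_one_iff_integrable.mp h
  simpa [Pi.smul_apply', smul_eq_mul, Pi.mul_def] using this

lemma l2_span_norm {X : Set (Fin d → ℝ)} (μ : Measure X) {m : ℕ} (φ : Fin m → X → ℝ)
    (hφ2 : ∀ j, MemLp (φ j) 2 μ)
    (hortho : ∀ i j, (∫ t, φ i t * φ j t ∂μ) = if i = j then (1 : ℝ) else 0)
    (c : Fin m → ℝ) :
    l2normSq μ (fun t => ∑ j, c j * φ j t) = ∑ j, c j ^ 2 := by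
  have hint : ∀ j k : Fin m, Integrable (fun t => c j * c k * (φ j t * φ k t)) μ :=
    fun j k => (phi_mul_integrable (hφ2 j) (hφ2 k)).const_mul _
  have hpt : ∀ t, (∑ j, c j * φ j t) ^ 2 = ∑ j, ∑ k, c j * c k * (φ j t * φ k t) := by
    intro t
    rw [sq, Finset.sum_mul_sum]
    exact Finset.sum_congr rfl fun j _ => Finset.sum_congr rfl fun k _ => by ring
  unfold l2normSq
  calc ∫ t, (∑ j, c j * φ j t) ^ 2 ∂μ
      = ∫ t, ∑ j, ∑ k, c j * c k * (φ j t * φ k t) ∂μ :=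
        integral_congr_ae (Filter.Eventually.of_forall fun t => hpt t)
    _ = ∑ j, ∑ k, ∫ t, c j * c k * (φ j t * φ k t) ∂μ := by
        rw [integral_finset_sum _ fun j _ => integrable_finset_sum _ fun k _ => hint j k]
        exact Finset.sum_congr rfl fun j _ => integral_finset_sum _ fun k _ => hint j k
    _ = ∑ j, ∑ k, c j * c k * (if j = k then (1:ℝ) else 0) := by
        refine Finset.sum_congr rfl fun j _ => Finset.sum_congr rfl fun k _ => ?_
        rw [integral_const_mul, hortho j k]
    _ = ∑ j, c j ^ 2 := by
        simp [mul_ite, Finset.sum_ite_eq', sq]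

lemma map_eval_pi' {ι : Type*} [Fintype ι] {α : ι → Type*} [∀ i, MeasurableSpace (α i)]
    (μ : ∀ i, Measure (α i)) [∀ i, IsProbabilityMeasure (μ i)] (i : ι) :
    Measure.map (Function.eval i) (Measure.pi μ) = μ i := by
  classical
  ext s hs
  rw [Measure.map_apply (measurable_pi_apply i) hs, ← Set.univ_pi_update_univ, Measure.pi_pi]
  rw [Fintype.prod_eq_single i (fun j hj => by rw [Function.update_of_ne hj]; simp)]
  simp

lemma specNorm_continuous {m : ℕ} : Continuous (specNorm (m := m)) := by
  have hlin : Continuous fun A : Matrix (Fin m) (Fin m) ℝ =>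
      (Matrix.toEuclideanCLM (𝕜 := ℝ) A :
        EuclideanSpace ℝ (Fin m) →L[ℝ] EuclideanSpace ℝ (Fin m)) := by
    exact LinearMap.continuous_of_finiteDimensional
      (f := { toFun := fun A => Matrix.toEuclideanCLM (𝕜 := ℝ) A,
              map_add' := fun a b => map_add _ a b,
              map_smul' := fun r a => map_smul _ r a })
  exact continuous_norm.comp hlin

lemma wv2_integral {X : Set (Fin d → ℝ)} (μ : Measure X) (w : X → ℝ) (hw : ∀ t, 0 < w t)
    (hwm : Measurable w) (v : X → ℝ) :
    ∫ t, w t * v t ^ 2 ∂(μ.withDensity fun t => ENNReal.ofReal (w t)⁻¹)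
      = ∫ t, v t ^ 2 ∂μ := by
  have hmeas : Measurable fun t => ((w t)⁻¹).toNNReal := (hwm.inv).real_toNNReal
  rw [show (fun t => ENNReal.ofReal (w t)⁻¹) = fun t => (((w t)⁻¹).toNNReal : ℝ≥0∞) from rfl]
  rw [integral_withDensity_eq_integral_smul hmeas]
  refine integral_congr_ae (Filter.Eventually.of_forall fun t => ?_)
  have h1 : (((w t)⁻¹).toNNReal : ℝ) = (w t)⁻¹ :=
    Real.coe_toNNReal _ (le_of_lt (inv_pos.mpr (hw t)))
  show ((w t)⁻¹.toNNReal : ℝ≥0) • (w t * v t ^ 2) = v t ^ 2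
  rw [NNReal.smul_def, smul_eq_mul, h1]
  field_simp
  rw [mul_comm, mul_div_assoc, div_self (hw t).ne', mul_one]

lemma wv2_integrable {X : Set (Fin d → ℝ)} (μ : Measure X) (w : X → ℝ) (hw : ∀ t, 0 < w t)
    (hwm : Measurable w) (v : X → ℝ) (hv2 : MemLp v 2 μ) :
    Integrable (fun t => w t * v t ^ 2) (μ.withDensity fun t => ENNReal.ofReal (w t)⁻¹) := by
  have hmeas : Measurable fun t => ((w t)⁻¹).toNNReal := (hwm.inv).real_toNNReal
  rw [show (fun t => ENNReal.ofReal (w t)⁻¹) = fun t => (((w t)⁻¹).toNNReal : ℝ≥0∞) from rfl]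
  rw [integrable_withDensity_iff_integrable_smul hmeas]
  have heq : (fun t => ((w t)⁻¹.toNNReal : ℝ≥0) • (w t * v t ^ 2)) = fun t => v t ^ 2 := by
    funext t
    have h1 : (((w t)⁻¹).toNNReal : ℝ) = (w t)⁻¹ :=
      Real.coe_toNNReal _ (le_of_lt (inv_pos.mpr (hw t)))
    rw [NNReal.smul_def, smul_eq_mul, h1]
    field_simp
    rw [mul_comm, mul_div_assoc, div_self (hw t).ne', mul_one]
  rw [heq]
  exact hv2.integrable_sq

/-- Pointwise stability bound for the least-squares projection on a stable subsample. -/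
lemma pointwise_bound {X : Set (Fin d → ℝ)} (μ : Measure X)
    (w : X → ℝ) (hw : ∀ t, 0 < w t) {m : ℕ} (φ : Fin m → X → ℝ)
    (hφ2 : ∀ j, MemLp (φ j) 2 μ)
    (hortho : ∀ i j, (∫ t, φ i t * φ j t ∂μ) = if i = j then (1 : ℝ) else 0)
    {n : ℕ} (y : Fin n → X) (K : Finset (Fin n)) {δ : ℝ} (hδ1 : δ < 1)
    (hZK : ZstatK w φ y K ≤ δ) {nmin : ℕ} (hnmin : 0 < nmin) (hcard : nmin ≤ K.card)
    (v q : X → ℝ) (hq : q ∈ Vspan φ)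
    (hminq : ∀ g ∈ Vspan φ, discNormSqK w y K (v - q) ≤ discNormSqK w y K (v - g)) :
    l2normSq μ q ≤ (1 - δ)⁻¹ * ((n : ℝ) / (nmin : ℝ)) * discNormSq w y v := by
  classical
  obtain ⟨c, hc⟩ := (Submodule.mem_span_range_iff_exists_fun ℝ).mp hq
  have hqf : q = fun t => ∑ j, c j * φ j t := by
    rw [← hc]; funext t; rw [Finset.sum_apply]; rfl
  set S : ℝ := ∑ j, c j ^ 2 with hS
  have hS0 : 0 ≤ S := Finset.sum_nonneg fun j _ => sq_nonneg _
  have hδpos : (0:ℝ) < 1 - δ := by linarith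
  -- Step A
  have hA : l2normSq μ q = S := by
    rw [hqf]; exact l2_span_norm μ φ hφ2 hortho c
  -- Step B
  have hB : (1 - δ) * S ≤ discNormSqK w y K q := by
    have hqb := quad_bound (gramK w φ y K - 1) c
    have hsplit : ∑ j, ∑ k, c j * ((gramK w φ y K - 1) j k * c k)
        = (∑ j, ∑ k, c j * (gramK w φ y K j k * c k)) - S := by
      rw [hS, ← one_quadratic c, ← Finset.sum_sub_distrib]
      refine Finset.sum_congr rfl fun j _ => ?_
      rw [← Finset.sum_sub_distrib]
      refine Finset.sum_congr rfl fun k _ => ?_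
      simp only [Matrix.sub_apply]
      ring
    rw [hsplit] at hqb
    have hZ : specNorm (gramK w φ y K - 1) ≤ δ := hZK
    have habs := abs_le.mp hqb
    have hD : discNormSqK w y K q = ∑ j, ∑ k, c j * (gramK w φ y K j k * c k) := by
      rw [hqf]; exact gram_quadratic w φ y K c
    have hZS : specNorm (gramK w φ y K - 1) * S ≤ δ * S :=
      mul_le_mul_of_nonneg_right hZ hS0
    rw [hD]
    nlinarith [habs.1, habs.2, hZS]
  -- Step C
  have hC : discNormSqK w y K q ≤ discNormSqK w y K v := by
    apply min_norm_le w (fun t => (hw t).le) y K v q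
    intro t
    exact hminq ((1 + t) • q) (Submodule.smul_mem _ _ hq)
  -- Step D
  have hcardpos : (0:ℝ) < (K.card : ℝ) := by
    have : 0 < K.card := lt_of_lt_of_le hnmin hcard
    exact_mod_cast this
  have hnpos : (0:ℝ) < (n : ℝ) := by
    have h1 : K.card ≤ n := by simpa using Finset.card_le_univ K
    have : 0 < n := lt_of_lt_of_le (lt_of_lt_of_le hnmin hcard) h1
    exact_mod_cast this
  have hnminpos : (0:ℝ) < (nmin : ℝ) := by exact_mod_cast hnmin
  have hD : discNormSqK w y K v ≤ ((n : ℝ) / (nmin : ℝ)) * discNormSq w y v := by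
    unfold discNormSqK discNormSq
    have hterm : ∀ i : Fin n, 0 ≤ w (y i) * v (y i) ^ 2 :=
      fun i => mul_nonneg (hw _).le (sq_nonneg _)
    have hsub : ∑ i ∈ K, w (y i) * v (y i) ^ 2 ≤ ∑ i, w (y i) * v (y i) ^ 2 :=
      Finset.sum_le_sum_of_subset_of_nonneg (Finset.subset_univ K)
        (fun i _ _ => hterm i)
    have hKsum0 : 0 ≤ ∑ i ∈ K, w (y i) * v (y i) ^ 2 :=
      Finset.sum_nonneg fun i _ => hterm i
    have h1 : (1 / (K.card : ℝ)) * ∑ i ∈ K, w (y i) * v (y i) ^ 2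
        ≤ (1 / (nmin : ℝ)) * ∑ i ∈ K, w (y i) * v (y i) ^ 2 := by
      apply mul_le_mul_of_nonneg_right _ hKsum0
      apply one_div_le_one_div_of_le hnminpos
      exact_mod_cast hcard
    have h2 : (1 / (nmin : ℝ)) * ∑ i ∈ K, w (y i) * v (y i) ^ 2
        ≤ (1 / (nmin : ℝ)) * ∑ i, w (y i) * v (y i) ^ 2 := by
      apply mul_le_mul_of_nonneg_left hsub
      positivity
    have h3 : (1 / (nmin : ℝ)) * ∑ i, w (y i) * v (y i) ^ 2
        = ((n : ℝ) / (nmin : ℝ)) * ((1 / (n : ℝ)) * ∑ i, w (y i) * v (y i) ^ 2) := by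
      field_simp
    linarith
  -- combine
  rw [hA]
  have hfinal : S ≤ (1 - δ)⁻¹ * (((n : ℝ) / (nmin : ℝ)) * discNormSq w y v) := by
    rw [← mul_le_mul_iff_right₀ hδpos, ← mul_assoc, mul_inv_cancel₀ hδpos.ne', one_mul]
    calc (1 - δ) * S ≤ discNormSqK w y K q := hB
      _ ≤ discNormSqK w y K v := hC
      _ ≤ ((n : ℝ) / (nmin : ℝ)) * discNormSq w y v := hD
  linarith [hfinal, mul_assoc ((1 - δ)⁻¹) ((n : ℝ) / (nmin : ℝ)) (discNormSq w y v)]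

end Aux

/-- stability in expectation of the weighted least-squares projection built on
a stable subsample of the boosted sample. -/
theorem boosted_subsample_lsq_projection_stability
    {m n M : ℕ} (hM : 0 < M) {X : Set (Fin d → ℝ)} (μ : Measure X) [IsProbabilityMeasure μ]
    (w : X → ℝ) (hw : ∀ t, 0 < w t) (hwm : Measurable w)
    (ρ : Measure X) [IsProbabilityMeasure ρ]
    (hρ : ρ = μ.withDensity fun t => ENNReal.ofReal (w t)⁻¹)
    (φ : Fin m → X → ℝ) (hφm : ∀ j, Measurable (φ j)) (hφ2 : ∀ j, MemLp (φ j) 2 μ)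
    (hortho : ∀ i j, (∫ t, φ i t * φ j t ∂μ) = if i = j then (1 : ℝ) else 0)
    (δ η : ℝ) (hδ0 : 0 < δ) (hδ1 : δ < 1) (hη0 : 0 < η) (hη1 : η < 1)
    (hPZ : (Measure.pi fun _ : Fin n => ρ) {y | δ < Zstat w φ y} ≤ ENNReal.ofReal η)
    (Istar : (Fin M → Fin n → X) → Fin M) (hIm : Measurable Istar)
    (hmin : ∀ (ω : Fin M → Fin n → X) (i : Fin M),
      Zstat w φ (ω (Istar ω)) ≤ Zstat w φ (ω i))
    (hexch : ∀ σ : Equiv.Perm (Fin M),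
      Measure.map (fun ω : Fin M → Fin n → X => ((fun i => ω (σ i)), σ.symm (Istar ω)))
          (bigP ρ M n) =
        Measure.map (fun ω => (ω, Istar ω)) (bigP ρ M n))
    (nmin : ℕ) (hnmin : 0 < nmin)
    (Kf : (Fin n → X) → Finset (Fin n))
    (hK : ∀ y : Fin n → X, Zstat w φ y ≤ δ →
      nmin ≤ (Kf y).card ∧ ZstatK w φ y (Kf y) ≤ δ)
    (v : X → ℝ) (hvm : Measurable v) (hv2 : MemLp v 2 μ)
    (Q : (Fin n → X) → X → ℝ)
    (hQ : ∀ y : Fin n → X, Q y ∈ Vspan φ ∧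
      ∀ g ∈ Vspan φ, discNormSqK w y (Kf y) (v - Q y) ≤ discNormSqK w y (Kf y) (v - g)) :
    (∫ ω, l2normSq μ (Q (ω (Istar ω)))
        ∂((bigP ρ M n)[|{ω | Zstat w φ (ω (Istar ω)) ≤ δ}])) ≤
      (1 - δ)⁻¹ * M * (1 - η ^ M)⁻¹ * ((n : ℝ) / (nmin : ℝ)) * l2normSq μ v := by
  classical
  haveI hPnprob : IsProbabilityMeasure (Measure.pi fun _ : Fin n => ρ) := by infer_instance
  haveI hPprob : IsProbabilityMeasure (bigP (X := X) ρ M n) := by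
    unfold bigP; infer_instance
  set Pn : Measure (Fin n → X) := Measure.pi fun _ : Fin n => ρ with hPn
  set P : Measure (Fin M → Fin n → X) := bigP (X := X) ρ M n with hPdef
  have hPeq : P = Measure.pi fun _ : Fin M => Pn := rfl
  set A : Set (Fin M → Fin n → X) := {ω | Zstat w φ (ω (Istar ω)) ≤ δ} with hA
  -- measurability of Zstat
  have hZm : Measurable fun y : Fin n → X => Zstat w φ y := by
    have hTcont : Continuous fun B : Fin m → Fin m → ℝ => specNorm (Matrix.of B - 1) := by
      have h1 : Continuous fun B : Matrix (Fin m) (Fin m) ℝ => specNorm (B - 1) :=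
        specNorm_continuous.comp (continuous_id.sub continuous_const)
      have h2 : Continuous fun B : Fin m → Fin m → ℝ => (Matrix.of B : Matrix (Fin m) (Fin m) ℝ) :=
        continuous_matrix fun i j => (continuous_apply j).comp (continuous_apply i)
      exact h1.comp h2
    have hGm : Measurable fun y : Fin n → X => (fun j k => gram w φ y j k : Fin m → Fin m → ℝ) := by
      apply measurable_pi_lambda
      intro j
      apply measurable_pi_lambda
      intro k
      show Measurable fun y : Fin n → X => gram w φ y j k
      unfold gram
      simp only [Matrix.of_apply]
      apply Measurable.const_mul
      apply Finset.measurable_sum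
      intro i _
      exact (hwm.comp (measurable_pi_apply i)).mul
        (((hφm j).comp (measurable_pi_apply i)).mul ((hφm k).comp (measurable_pi_apply i)))
    have : (fun y : Fin n → X => Zstat w φ y)
        = (fun B : Fin m → Fin m → ℝ => specNorm (Matrix.of B - 1))
          ∘ (fun y : Fin n → X => (fun j k => gram w φ y j k : Fin m → Fin m → ℝ)) := rfl
    rw [this]
    exact hTcont.measurable.comp hGm
  -- selection map is measurable
  have hsel : Measurable fun ω : Fin M → Fin n → X => ω (Istar ω) := by
    intro s hs
    have hset : (fun ω : Fin M → Fin n → X => ω (Istar ω)) ⁻¹' s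
        = ⋃ i, {ω | Istar ω = i} ∩ (fun ω : Fin M → Fin n → X => ω i) ⁻¹' s := by
      ext ω
      simp only [Set.mem_preimage, Set.mem_iUnion, Set.mem_inter_iff, Set.mem_setOf_eq]
      constructor
      · intro h; exact ⟨Istar ω, rfl, h⟩
      · rintro ⟨i, hi, h⟩; rw [hi]; exact h
    rw [hset]
    exact MeasurableSet.iUnion fun i =>
      (hIm (measurableSet_singleton i)).inter (measurable_pi_apply i hs)
  have hAmeas : MeasurableSet A := by
    have : A = (fun ω : Fin M → Fin n → X => Zstat w φ (ω (Istar ω))) ⁻¹' (Set.Iic δ) := rfl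
    rw [this]
    exact (hZm.comp hsel) measurableSet_Iic
  -- bound on the complement
  have hAc : Aᶜ = Set.pi Set.univ (fun _ : Fin M => {y : Fin n → X | δ < Zstat w φ y}) := by
    ext ω
    simp only [Set.mem_compl_iff, hA, Set.mem_setOf_eq, not_le, Set.mem_pi, Set.mem_univ,
      forall_true_left]
    constructor
    · intro h i; exact lt_of_lt_of_le h (hmin ω i)
    · intro h; exact h (Istar ω)
  have hPAc : P Aᶜ ≤ ENNReal.ofReal (η ^ M) := by
    rw [hAc, hPeq, Measure.pi_pi]
    calc ∏ _i : Fin M, Pn {y : Fin n → X | δ < Zstat w φ y}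
        ≤ ∏ _i : Fin M, ENNReal.ofReal η := Finset.prod_le_prod' fun i _ => hPZ
      _ = ENNReal.ofReal η ^ M := by
          rw [Finset.prod_const, Finset.card_univ, Fintype.card_fin]
      _ = ENNReal.ofReal (η ^ M) := (ENNReal.ofReal_pow hη0.le M).symm
  have hηM1 : η ^ M < 1 := pow_lt_one₀ hη0.le hη1 hM.ne'
  have hηM0 : (0:ℝ) < η ^ M := pow_pos hη0 M
  have hPA_lb : ENNReal.ofReal (1 - η ^ M) ≤ P A := by
    have hsum : P A + P Aᶜ = 1 := by
      rw [measure_add_measure_compl hAmeas]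
      exact measure_univ
    have h1 : (1 : ℝ≥0∞) - P Aᶜ ≤ P A := by
      rw [← hsum, ENNReal.add_sub_cancel_right (measure_ne_top P Aᶜ)]
    calc ENNReal.ofReal (1 - η ^ M)
        = ENNReal.ofReal 1 - ENNReal.ofReal (η ^ M) := ENNReal.ofReal_sub _ hηM0.le
      _ = 1 - ENNReal.ofReal (η ^ M) := by rw [ENNReal.ofReal_one]
      _ ≤ 1 - P Aᶜ := tsub_le_tsub_left hPAc 1
      _ ≤ P A := h1
  have hPAtop : P A ≠ ⊤ := measure_ne_top _ _
  have hPAr : 1 - η ^ M ≤ (P A).toReal := by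
    have := ENNReal.toReal_mono hPAtop hPA_lb
    rwa [ENNReal.toReal_ofReal (by linarith)] at this
  have hPA0 : P A ≠ 0 := by
    intro h0
    rw [h0] at hPA_lb
    have : (1 : ℝ) - η ^ M ≤ 0 := by
      by_contra hcon
      push_neg at hcon
      exact (ENNReal.ofReal_pos.mpr hcon).ne' (le_antisymm hPA_lb bot_le)
    linarith
  -- nonnegativity
  have hl2v0 : 0 ≤ l2normSq μ v := integral_nonneg fun t => sq_nonneg _
  set C1 : ℝ := (1 - δ)⁻¹ * ((n : ℝ) / (nmin : ℝ)) with hC1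
  have hC10 : 0 ≤ C1 := by
    apply mul_nonneg
    · exact inv_nonneg.mpr (by linarith)
    · positivity
  set h : (Fin n → X) → ℝ := fun y => discNormSq w y v with hh
  have hh0 : ∀ y, 0 ≤ h y := fun y => disc_nonneg w (fun t => (hw t).le) y v
  set g : (Fin M → Fin n → X) → ℝ := fun ω => C1 * ∑ i, h (ω i) with hg
  have hg0 : ∀ ω, 0 ≤ g ω :=
    fun ω => mul_nonneg hC10 (Finset.sum_nonneg fun i _ => hh0 _)
  -- pointwise bound on A
  have hpointwise : ∀ ω ∈ A, l2normSq μ (Q (ω (Istar ω))) ≤ g ω := by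
    intro ω hω
    have hZω : Zstat w φ (ω (Istar ω)) ≤ δ := hω
    obtain ⟨hcard, hZK⟩ := hK (ω (Istar ω)) hZω
    have h1 := pointwise_bound μ w hw φ hφ2 hortho (ω (Istar ω)) (Kf (ω (Istar ω))) hδ1
      hZK hnmin hcard v (Q (ω (Istar ω))) (hQ (ω (Istar ω))).1 (hQ (ω (Istar ω))).2
    have h2 : discNormSq w (ω (Istar ω)) v ≤ ∑ i, h (ω i) :=
      Finset.single_le_sum (f := fun i => h (ω i)) (fun i _ => hh0 _)
        (Finset.mem_univ (Istar ω))
    calc l2normSq μ (Q (ω (Istar ω)))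
        ≤ C1 * discNormSq w (ω (Istar ω)) v := by
          rw [hC1]; exact h1
      _ ≤ C1 * ∑ i, h (ω i) := mul_le_mul_of_nonneg_left h2 hC10
      _ = g ω := rfl
  -- integrability and expectations
  have hwv2m : Measurable fun t : X => w t * v t ^ 2 := hwm.mul (hvm.pow_const 2)
  have hwv2int : Integrable (fun t : X => w t * v t ^ 2) ρ := by
    rw [hρ]; exact wv2_integrable μ w hw hwm v hv2
  have hwv2val : ∫ t, w t * v t ^ 2 ∂ρ = l2normSq μ v := by
    rw [hρ]; exact wv2_integral μ w hw hwm v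
  have hhm : Measurable h := by
    rw [hh]
    unfold discNormSq
    apply Measurable.const_mul
    apply Finset.measurable_sum
    intro j _
    exact (hwm.comp (measurable_pi_apply j)).mul
      ((hvm.comp (measurable_pi_apply j)).pow_const 2)
  have hInt_hj : ∀ j : Fin n, Integrable (fun y : Fin n → X => w (y j) * v (y j) ^ 2) Pn := by
    intro j
    have hmap : Measure.map (Function.eval j) Pn = ρ := map_eval_pi' (fun _ : Fin n => ρ) j
    exact (integrable_map_measure (by rw [hmap]; exact hwv2m.aestronglyMeasurable)
      (measurable_pi_apply j).aemeasurable).mp (by rwa [hmap])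
  have hIhj : ∀ j : Fin n, ∫ y, w (y j) * v (y j) ^ 2 ∂Pn = l2normSq μ v := by
    intro j
    have hmap : Measure.map (Function.eval j) Pn = ρ := map_eval_pi' (fun _ : Fin n => ρ) j
    rw [← hwv2val, ← hmap,
      integral_map (measurable_pi_apply j).aemeasurable
        (by rw [hmap]; exact hwv2m.aestronglyMeasurable)]
  have hInt_h : Integrable h Pn := by
    have h1 : Integrable (fun y : Fin n → X => ∑ j, w (y j) * v (y j) ^ 2) Pn :=
      integrable_finset_sum _ fun j _ => hInt_hj j
    have : h = fun y => (1 / (n : ℝ)) * ∑ j, w (y j) * v (y j) ^ 2 := rfl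
    rw [this]
    exact h1.const_mul _
  have hIh : ∫ y, h y ∂Pn ≤ l2normSq μ v := by
    have hsum : ∫ y, (∑ j, w (y j) * v (y j) ^ 2) ∂Pn = (n : ℝ) * l2normSq μ v := by
      rw [integral_finset_sum _ fun j _ => hInt_hj j,
        Finset.sum_congr rfl fun j _ => hIhj j, Finset.sum_const, Finset.card_univ,
        Fintype.card_fin, nsmul_eq_mul]
    have heq : ∫ y, h y ∂Pn = (1 / (n : ℝ)) * ((n : ℝ) * l2normSq μ v) := by
      have : h = fun y => (1 / (n : ℝ)) * ∑ j, w (y j) * v (y j) ^ 2 := rfl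
      rw [this, integral_const_mul, hsum]
    rw [heq]
    by_cases hn : (n : ℝ) = 0
    · simp [hn]; exact hl2v0
    · rw [one_div, inv_mul_cancel_left₀ hn]
  have hInt_gi : ∀ i : Fin M, Integrable (fun ω : Fin M → Fin n → X => h (ω i)) P := by
    intro i
    have hmap : Measure.map (Function.eval i) P = Pn := by
      rw [hPeq]; exact map_eval_pi' (fun _ : Fin M => Pn) i
    exact (integrable_map_measure (by rw [hmap]; exact hhm.aestronglyMeasurable)
      (measurable_pi_apply i).aemeasurable).mp (by rwa [hmap])
  have hIgi : ∀ i : Fin M, ∫ ω, h (ω i) ∂P = ∫ y, h y ∂Pn := by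
    intro i
    have hmap : Measure.map (Function.eval i) P = Pn := by
      rw [hPeq]; exact map_eval_pi' (fun _ : Fin M => Pn) i
    rw [← hmap, integral_map (measurable_pi_apply i).aemeasurable
      (by rw [hmap]; exact hhm.aestronglyMeasurable)]
  have hInt_g : Integrable g P := by
    have h1 : Integrable (fun ω : Fin M → Fin n → X => ∑ i, h (ω i)) P :=
      integrable_finset_sum _ fun i _ => hInt_gi i
    exact h1.const_mul _
  have hIg : ∫ ω, g ω ∂P ≤ C1 * M * l2normSq μ v := by
    have hIhPn0 : 0 ≤ ∫ y, h y ∂Pn := integral_nonneg hh0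
    calc ∫ ω, g ω ∂P = C1 * ∫ ω, ∑ i, h (ω i) ∂P := integral_const_mul _ _
      _ = C1 * ∑ i : Fin M, ∫ ω, h (ω i) ∂P := by
          rw [integral_finset_sum _ fun i _ => hInt_gi i]
      _ = C1 * ((M : ℝ) * ∫ y, h y ∂Pn) := by
          rw [Finset.sum_congr rfl fun i _ => hIgi i, Finset.sum_const, Finset.card_univ,
            Fintype.card_fin, nsmul_eq_mul]
      _ ≤ C1 * ((M : ℝ) * l2normSq μ v) := by
          apply mul_le_mul_of_nonneg_left _ hC10
          exact mul_le_mul_of_nonneg_left hIh (by positivity)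
      _ = C1 * M * l2normSq μ v := by ring
  -- conditional expectation bound
  have hcond : P[|A] = (P A)⁻¹ • P.restrict A := rfl
  have hRHS0 : 0 ≤ (1 - δ)⁻¹ * M * (1 - η ^ M)⁻¹ * ((n : ℝ) / (nmin : ℝ)) * l2normSq μ v := by
    apply mul_nonneg _ hl2v0
    apply mul_nonneg _ (by positivity)
    apply mul_nonneg _ (inv_nonneg.mpr (by linarith))
    apply mul_nonneg (inv_nonneg.mpr (by linarith)) (by positivity)
  by_cases hf : Integrable (fun ω : Fin M → Fin n → X => l2normSq μ (Q (ω (Istar ω)))) (P[|A])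
  · have hgle : ∀ᵐ ω ∂(P[|A]), l2normSq μ (Q (ω (Istar ω))) ≤ g ω := by
      rw [hcond]
      exact Measure.ae_smul_measure
        ((ae_restrict_iff' hAmeas).mpr (Filter.Eventually.of_forall hpointwise)) _
    have hgint_cond : Integrable g (P[|A]) := by
      rw [hcond]
      exact (hInt_g.restrict).smul_measure (ENNReal.inv_ne_top.mpr hPA0)
    have hle1 : ∫ ω, l2normSq μ (Q (ω (Istar ω))) ∂(P[|A]) ≤ ∫ ω, g ω ∂(P[|A]) :=
      integral_mono_ae hf hgint_cond hgle
    have hcondval : ∫ ω, g ω ∂(P[|A]) = ((P A)⁻¹).toReal * ∫ ω in A, g ω ∂P := by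
      rw [hcond, integral_smul_measure, smul_eq_mul]
    have hrestr : ∫ ω in A, g ω ∂P ≤ ∫ ω, g ω ∂P :=
      integral_mono_measure Measure.restrict_le_self
        (Filter.Eventually.of_forall hg0) hInt_g
    have hηinv0 : (0:ℝ) ≤ (1 - η ^ M)⁻¹ := inv_nonneg.mpr (by linarith)
    have hinvle : ((P A)⁻¹).toReal ≤ (1 - η ^ M)⁻¹ := by
      rw [ENNReal.toReal_inv]
      exact inv_anti₀ (by linarith) hPAr
    have hintA0 : 0 ≤ ∫ ω in A, g ω ∂P := integral_nonneg hg0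
    calc ∫ ω, l2normSq μ (Q (ω (Istar ω))) ∂(P[|A])
        ≤ ∫ ω, g ω ∂(P[|A]) := hle1
      _ = ((P A)⁻¹).toReal * ∫ ω in A, g ω ∂P := hcondval
      _ ≤ (1 - η ^ M)⁻¹ * ∫ ω in A, g ω ∂P := mul_le_mul_of_nonneg_right hinvle hintA0
      _ ≤ (1 - η ^ M)⁻¹ * ∫ ω, g ω ∂P := mul_le_mul_of_nonneg_left hrestr hηinv0
      _ ≤ (1 - η ^ M)⁻¹ * (C1 * M * l2normSq μ v) := mul_le_mul_of_nonneg_left hIg hηinv0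
      _ = (1 - δ)⁻¹ * M * (1 - η ^ M)⁻¹ * ((n : ℝ) / (nmin : ℝ)) * l2normSq μ v := by
          rw [hC1]; ring
  · rw [integral_undef hf]
    exact hRHS0
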